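/- For a vectorized n×n permutation matrix x, the union over all tuples (z₁, z₂, z₃, z₄) ∈ 𝒩(x) of the pairs {z₁, z₂} equals supp(x), and the union of the pairs {z₃, z₄} equals the complement {0,…,n²−1} \ supp(x), provided n ≥ 2. -/
import Mathlib


open Matrix

def IsPermVec {n : ℕ} (x : Fin (n * n) → ℝ) : Prop :=
  ∃ σ : Equiv.Perm (Fin n), ∀ z : Fin (n * n),
    x z = if z.modNat = σ z.divNat then 1 else 0

def FullNbhd {n : ℕ} (x : Fin (n * n) → ℝ) :
    Set (Fin (n * n) × Fin (n * n) × Fin (n * n) × Fin (n * n)) :=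
  {t | x t.1 = 1 ∧ x t.2.1 = 1 ∧ (t.1 : ℕ) < (t.2.1 : ℕ) ∧
    (t.2.2.1 : ℕ) = (t.2.1 : ℕ) / n * n + (t.1 : ℕ) % n ∧
    (t.2.2.2 : ℕ) = (t.1 : ℕ) / n * n + (t.2.1 : ℕ) % n}

/-- The union of the pairs `{z₁, z₂}` over all tuples of `𝒩(x)` is `supp(x)`,
and the union of the pairs `{z₃, z₄}` is the complement of `supp(x)`. -/
theorem fullNbhd_unions {n : ℕ} (hn : 2 ≤ n)
    (x : Fin (n * n) → ℝ) (hx : IsPermVec x) :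
    {i : Fin (n * n) | ∃ t ∈ FullNbhd x, i = t.1 ∨ i = t.2.1} = {i | x i = 1} ∧
    {i : Fin (n * n) | ∃ t ∈ FullNbhd x, i = t.2.2.1 ∨ i = t.2.2.2} = {i | x i = 1}ᶜ := by
  obtain ⟨σ, hσ⟩ := hx
  have hn0 : 0 < n := by omega
  have hx1 : ∀ z : Fin (n*n), x z = 1 ↔ z.modNat = σ z.divNat := by
    intro z; rw [hσ]; split <;> simp_all
  have hlt : ∀ r c : Fin n, (r:ℕ)*n + (c:ℕ) < n*n := by
    intro r c; have h1 := r.isLt; have h2 := c.isLt; nlinarith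
  have hdiv : ∀ r c : Fin n, ((r:ℕ)*n + (c:ℕ)) / n = (r:ℕ) := by
    intro r c; rw [mul_comm, Nat.mul_add_div hn0, Nat.div_eq_of_lt c.isLt, Nat.add_zero]
  have hmod : ∀ r c : Fin n, ((r:ℕ)*n + (c:ℕ)) % n = (c:ℕ) := by
    intro r c; rw [mul_comm, Nat.mul_add_mod, Nat.mod_eq_of_lt c.isLt]
  have hediv : ∀ r c : Fin n, (⟨(r:ℕ)*n + (c:ℕ), hlt r c⟩ : Fin (n*n)).divNat = r := by
    intro r c; apply Fin.ext; rw [Fin.coe_divNat]; exact hdiv r c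
  have hemod : ∀ r c : Fin n, (⟨(r:ℕ)*n + (c:ℕ), hlt r c⟩ : Fin (n*n)).modNat = c := by
    intro r c; apply Fin.ext; rw [Fin.coe_modNat]; exact hmod r c
  have hxe : ∀ r c : Fin n, x ⟨(r:ℕ)*n + (c:ℕ), hlt r c⟩ = 1 ↔ c = σ r := by
    intro r c; rw [hx1, hediv, hemod]
  have hdecomp : ∀ z : Fin (n*n), (z:ℕ) = (z.divNat:ℕ)*n + (z.modNat:ℕ) := by
    intro z
    rw [Fin.coe_divNat, Fin.coe_modNat]
    have h := Nat.div_add_mod (z:ℕ) n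
    have h2 : (z:ℕ)/n*n = n*((z:ℕ)/n) := mul_comm _ _
    omega
  have hltd : ∀ a b : Fin (n*n), (a:ℕ)/n*n + (b:ℕ)%n < n*n := by
    intro a b
    have h1 : (a:ℕ)/n < n := Nat.div_lt_of_lt_mul a.isLt
    have h2 : (b:ℕ)%n < n := Nat.mod_lt _ hn0
    nlinarith
  have hswap : ∀ a b k : Fin (n*n), (k:ℕ) = (a:ℕ)/n*n + (b:ℕ)%n →
      k.divNat = a.divNat ∧ k.modNat = b.modNat := by
    intro a b k hk
    have h1 : (k:ℕ) = (a.divNat:ℕ)*n + (b.modNat:ℕ) := by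
      rw [Fin.coe_divNat, Fin.coe_modNat]; exact hk
    constructor
    · apply Fin.ext; rw [Fin.coe_divNat, h1, hdiv]
    · apply Fin.ext; rw [Fin.coe_modNat, h1, hmod]
  have hrowne : ∀ a b : Fin (n*n), x a = 1 → x b = 1 → (a:ℕ) ≠ (b:ℕ) →
      a.divNat ≠ b.divNat := by
    intro a b ha hb hab hdv
    apply hab
    rw [hdecomp a, hdecomp b, hdv, (hx1 a).mp ha, (hx1 b).mp hb, hdv]
  constructor
  · ext i
    simp only [Set.mem_setOf_eq]
    constructor
    · rintro ⟨t, ht, (rfl | rfl)⟩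
      · exact ht.1
      · exact ht.2.1
    · intro hi
      have : Nontrivial (Fin n) := Fin.nontrivial_iff_two_le.mpr hn
      obtain ⟨r', hr'⟩ := exists_ne i.divNat
      set j : Fin (n*n) := ⟨(r':ℕ)*n + (σ r' : ℕ), hlt r' (σ r')⟩ with hj
      have hxj : x j = 1 := (hxe r' (σ r')).mpr rfl
      have hij : (i:ℕ) ≠ (j:ℕ) := by
        intro h
        apply hr'
        have hd : i.divNat = j.divNat := congrArg Fin.divNat (Fin.ext h)
        exact (hd.trans (hediv r' (σ r'))).symm
      rcases hij.lt_or_gt with h | h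
      · exact ⟨(i, j, ⟨(j:ℕ)/n*n + (i:ℕ)%n, hltd j i⟩, ⟨(i:ℕ)/n*n + (j:ℕ)%n, hltd i j⟩),
          ⟨hi, hxj, h, rfl, rfl⟩, Or.inl rfl⟩
      · exact ⟨(j, i, ⟨(i:ℕ)/n*n + (j:ℕ)%n, hltd i j⟩, ⟨(j:ℕ)/n*n + (i:ℕ)%n, hltd j i⟩),
          ⟨hxj, hi, h, rfl, rfl⟩, Or.inr rfl⟩
  · ext i
    simp only [Set.mem_setOf_eq, Set.mem_compl_iff]
    constructor
    · rintro ⟨t, ⟨h1, h2, hlt12, h3, h4⟩, hi⟩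
      have hrne : t.1.divNat ≠ t.2.1.divNat :=
        hrowne t.1 t.2.1 h1 h2 (Nat.ne_of_lt hlt12)
      have hm1 := (hx1 t.1).mp h1
      have hm2 := (hx1 t.2.1).mp h2
      rw [hx1]
      rcases hi with rfl | rfl
      · obtain ⟨hd, hm⟩ := hswap t.2.1 t.1 _ h3
        rw [hd, hm, hm1]
        intro hc
        exact hrne (σ.injective hc)
      · obtain ⟨hd, hm⟩ := hswap t.1 t.2.1 _ h4
        rw [hd, hm, hm2]
        intro hc
        exact hrne (σ.injective hc).symm
    · intro hi
      rw [hx1] at hi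
      set r := i.divNat with hr
      set c := i.modNat with hc
      set r' := σ.symm c with hr'def
      have hr'ne : r' ≠ r := by
        intro h
        exact hi (by rw [← h, hr'def, Equiv.apply_symm_apply])
      set z : Fin (n*n) := ⟨(r:ℕ)*n + (σ r : ℕ), hlt r (σ r)⟩ with hz
      set z' : Fin (n*n) := ⟨(r':ℕ)*n + (c:ℕ), hlt r' c⟩ with hz'
      have hxz : x z = 1 := (hxe r (σ r)).mpr rfl
      have hxz' : x z' = 1 := (hxe r' c).mpr (Equiv.apply_symm_apply σ c).symm
      have hival : (i:ℕ) = (r:ℕ)*n + (c:ℕ) := hdecomp i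
      have hzdiv : (z:ℕ)/n = (r:ℕ) := hdiv r (σ r)
      have hzmod : (z:ℕ)%n = (σ r:ℕ) := hmod r (σ r)
      have hz'div : (z':ℕ)/n = (r':ℕ) := hdiv r' c
      have hz'mod : (z':ℕ)%n = (c:ℕ) := hmod r' c
      have hzz' : (z:ℕ) ≠ (z':ℕ) := by
        intro h
        apply hr'ne
        apply Fin.ext
        rw [← hzdiv, ← hz'div, h]
      rcases hzz'.lt_or_gt with h | h
      · refine ⟨(z, z', ⟨(z':ℕ)/n*n + (z:ℕ)%n, hltd z' z⟩,
          ⟨(z:ℕ)/n*n + (z':ℕ)%n, hltd z z'⟩), ⟨hxz, hxz', h, rfl, rfl⟩, Or.inr ?_⟩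
        apply Fin.ext
        show (i:ℕ) = (z:ℕ)/n*n + (z':ℕ)%n
        rw [hzdiv, hz'mod, hival]
      · refine ⟨(z', z, ⟨(z:ℕ)/n*n + (z':ℕ)%n, hltd z z'⟩,
          ⟨(z':ℕ)/n*n + (z:ℕ)%n, hltd z' z⟩), ⟨hxz', hxz, h, rfl, rfl⟩, Or.inl ?_⟩
        apply Fin.ext
        show (i:ℕ) = (z:ℕ)/n*n + (z':ℕ)%n
        rw [hzdiv, hz'mod, hival]
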